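/- Let μ be an atomless Borel probability measure on ℝ and μ^7 the product measure on (Fin 7 → ℝ). Let A be the event that positions 1 and 5 are local maxima and no position strictly between them (positions 2, 3, 4) is a local maximum, and let B be the event that position 1 is a local maximum (x 0 < x 1 ∧ x 2 < x 1). Then μ^7(A) / μ^7(B) = 6/35; i.e. f_m(4) = 6/35. -/

import Mathlib

open MeasureTheory Set
open scoped ENNReal

namespace FmFour

variable {μ : Measure ℝ} [IsProbabilityMeasure μ] [NullSingletonClass μ]

local notation "P" => Measure.pi (fun _ : Fin 7 => μ)

/-- The set where coordinates `i` and `j` tie is null. -/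
lemma tie_null (i j : Fin 7) (hij : i ≠ j) :
    P {x : Fin 7 → ℝ | x i = x j} = 0 := by
  set e := MeasurableEquiv.piFinSuccAbove (fun _ : Fin 7 => ℝ) i with he
  have hmp := measurePreserving_piFinSuccAbove (fun _ : Fin 7 => μ) i
  have hS : MeasurableSet {x : Fin 7 → ℝ | x i = x j} :=
    measurableSet_eq_fun (measurable_pi_apply i) (measurable_pi_apply j)
  have hA : MeasurableSet (e.symm ⁻¹' {x : Fin 7 → ℝ | x i = x j}) :=
    e.symm.measurable hS
  have key : P {x : Fin 7 → ℝ | x i = x j}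
      = (μ.prod (Measure.pi fun _ : Fin 6 => μ)) (e.symm ⁻¹' {x : Fin 7 → ℝ | x i = x j}) := by
    rw [← hmp.measure_preimage hA.nullMeasurableSet]
    congr 1
    exact (e.toEquiv.preimage_symm_preimage _).symm
  rw [key, Measure.measure_prod_null hA]
  refine Filter.Eventually.of_forall (fun a => ?_)
  obtain ⟨k, hk⟩ := Fin.exists_succAbove_eq (Ne.symm hij)
  have hset : Prod.mk a ⁻¹' (e.symm ⁻¹' {x : Fin 7 → ℝ | x i = x j})
      = {y : Fin 6 → ℝ | y k = a} := by
    ext y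
    simp only [Set.mem_preimage, Set.mem_setOf_eq]
    have : e.symm (a, y) = i.insertNth a y := rfl
    rw [this, Fin.insertNth_apply_same, ← hk, Fin.insertNth_apply_succAbove]
    exact eq_comm
  dsimp only
  rw [hset]
  exact Measure.pi_hyperplane (fun _ : Fin 6 => μ) k a

/-- The chain event for a permutation. -/
def chain (σ : Equiv.Perm (Fin 7)) : Set (Fin 7 → ℝ) := {x | StrictMono (x ∘ σ)}

lemma chain_measurable (σ : Equiv.Perm (Fin 7)) : MeasurableSet (chain σ) := by
  have : chain σ = ⋂ (k : Fin 7) (l : Fin 7) (_ : k < l),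
      {x : Fin 7 → ℝ | x (σ k) < x (σ l)} := by
    ext x
    simp [chain, StrictMono, Set.mem_iInter]
  rw [this]
  exact MeasurableSet.iInter fun k => MeasurableSet.iInter fun l =>
    MeasurableSet.iInter fun _ =>
      measurableSet_lt (measurable_pi_apply _) (measurable_pi_apply _)

lemma mem_chain_lt {σ : Equiv.Perm (Fin 7)} {x : Fin 7 → ℝ} (hx : x ∈ chain σ)
    {a b : Fin 7} : x a < x b ↔ σ⁻¹ a < σ⁻¹ b := by
  constructor
  · intro h
    rcases lt_trichotomy (σ⁻¹ a) (σ⁻¹ b) with h' | h' | h'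
    · exact h'
    · exfalso
      have : a = b := by
        have := congrArg σ h'
        simpa using this
      subst this; exact lt_irrefl _ h
    · exfalso
      have := hx h'
      simp only [Function.comp_apply, Equiv.Perm.coe_inv, Equiv.apply_symm_apply] at this
      exact absurd h (not_lt.2 this.le)
  · intro h
    have := hx h
    simpa using this

lemma injective_of_mem_chain {σ : Equiv.Perm (Fin 7)} {x : Fin 7 → ℝ}
    (hx : x ∈ chain σ) : Function.Injective x := by
  have h1 : Function.Injective (x ∘ σ) := (hx : StrictMono _).injective
  intro a b hab
  have : (x ∘ σ) (σ⁻¹ a) = (x ∘ σ) (σ⁻¹ b) := by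
    simp only [Function.comp_apply, Equiv.Perm.coe_inv, Equiv.apply_symm_apply]; exact hab
  have := h1 this
  simpa using congrArg σ this

lemma chain_disjoint : Pairwise (Function.onFun Disjoint chain) := by
  intro σ τ hst
  simp only [Function.onFun]
  rw [Set.disjoint_left]
  intro x hxσ hxτ
  apply hst
  have hinj : Function.Injective x := injective_of_mem_chain hxσ
  have hr : Set.range (x ∘ σ) = Set.range (x ∘ τ) := by
    rw [Set.range_comp, Set.range_comp, Equiv.range_eq_univ, Equiv.range_eq_univ]
  have := (StrictMono.range_inj (hxσ : StrictMono _) (hxτ : StrictMono _)).1 hr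
  exact Equiv.ext fun k => hinj (congrFun this k)

lemma exists_chain_of_injective {x : Fin 7 → ℝ} (hx : Function.Injective x) :
    ∃ σ, x ∈ chain σ := by
  refine ⟨Tuple.sort x, ?_⟩
  have hmono : Monotone (x ∘ Tuple.sort x) := Tuple.monotone_sort x
  exact hmono.strictMono_of_injective (hx.comp (Tuple.sort x).injective)

lemma not_chain_null : P {x : Fin 7 → ℝ | ∀ σ, x ∉ chain σ} = 0 := by
  have hsub : {x : Fin 7 → ℝ | ∀ σ, x ∉ chain σ}
      ⊆ ⋃ (i : Fin 7) (j : Fin 7) (_ : i ≠ j), {x : Fin 7 → ℝ | x i = x j} := by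
    intro x hx
    by_cases hinj : Function.Injective x
    · obtain ⟨σ, hσ⟩ := exists_chain_of_injective hinj
      exact absurd hσ (hx σ)
    · simp only [Function.Injective, not_forall] at hinj
      obtain ⟨i, j, hij, hne⟩ := hinj
      exact Set.mem_iUnion.2 ⟨i, Set.mem_iUnion.2 ⟨j, Set.mem_iUnion.2 ⟨hne, hij⟩⟩⟩
  refine measure_mono_null hsub ?_
  refine measure_iUnion_null fun i => measure_iUnion_null fun j => measure_iUnion_null fun h =>
    tie_null i j h

lemma chain_measure_eq (σ : Equiv.Perm (Fin 7)) :
    P (chain σ) = P (chain 1) := by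
  have hmp := measurePreserving_piCongrLeft (fun _ : Fin 7 => μ) (σ⁻¹ : Equiv.Perm (Fin 7))
  have happ : ∀ x : Fin 7 → ℝ,
      (MeasurableEquiv.piCongrLeft (fun _ : Fin 7 => ℝ) (σ⁻¹ : Equiv.Perm (Fin 7))) x
        = x ∘ σ := by
    intro x
    funext j
    have h1 := MeasurableEquiv.piCongrLeft_apply_apply
      (β := fun _ : Fin 7 => ℝ) (σ⁻¹ : Equiv.Perm (Fin 7)) x (σ j)
    simpa using h1
  have hpre : (MeasurableEquiv.piCongrLeft (fun _ : Fin 7 => ℝ)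
        (σ⁻¹ : Equiv.Perm (Fin 7))) ⁻¹' (chain 1) = chain σ := by
    ext x
    simp only [Set.mem_preimage, chain, Set.mem_setOf_eq, happ x]
    constructor
    · intro h a b hab
      have := h hab
      simpa using this
    · intro h a b hab
      have := h hab
      simpa using this
  calc P (chain σ) = P ((MeasurableEquiv.piCongrLeft (fun _ : Fin 7 => ℝ)
        (σ⁻¹ : Equiv.Perm (Fin 7))) ⁻¹' (chain 1)) := by rw [hpre]
    _ = P (chain 1) := hmp.measure_preimage (chain_measurable 1).nullMeasurableSet

lemma chain_measure (σ : Equiv.Perm (Fin 7)) :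
    P (chain σ) = (5040 : ℝ≥0∞)⁻¹ := by
  have hsum : ∑ τ : Equiv.Perm (Fin 7), P (chain τ) = 1 := by
    have hd : ((Finset.univ : Finset (Equiv.Perm (Fin 7))) : Set (Equiv.Perm (Fin 7))).Pairwise
        (Function.onFun Disjoint chain) := fun a _ b _ hab => chain_disjoint hab
    rw [← measure_biUnion_finset hd (fun τ _ => chain_measurable τ)]
    have hcover : P (⋃ τ ∈ (Finset.univ : Finset (Equiv.Perm (Fin 7))), chain τ) = 1 := by
      have : (⋃ τ ∈ (Finset.univ : Finset (Equiv.Perm (Fin 7))), chain τ)ᶜ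
          ⊆ {x : Fin 7 → ℝ | ∀ σ, x ∉ chain σ} := by
        intro x hx τ hmem
        exact hx (Set.mem_iUnion.2 ⟨τ, Set.mem_iUnion.2 ⟨Finset.mem_univ τ, hmem⟩⟩)
      have hc : P (⋃ τ ∈ (Finset.univ : Finset (Equiv.Perm (Fin 7))), chain τ)ᶜ = 0 :=
        measure_mono_null this not_chain_null
      have hms : MeasurableSet (⋃ τ ∈ (Finset.univ : Finset (Equiv.Perm (Fin 7))), chain τ) :=
        Finset.univ.measurableSet_biUnion (fun τ _ => chain_measurable τ)
      exact (prob_compl_eq_zero_iff hms).mp hc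
    exact hcover
  have hconst : ∀ τ : Equiv.Perm (Fin 7), P (chain τ) = P (chain 1) := chain_measure_eq
  rw [Finset.sum_congr rfl (fun τ _ => hconst τ), Finset.sum_const] at hsum
  have hcard : (Finset.univ : Finset (Equiv.Perm (Fin 7))).card = 5040 := by
    rw [Finset.card_univ, Fintype.card_perm, Fintype.card_fin]
    rfl
  rw [hcard, nsmul_eq_mul] at hsum
  push_cast at hsum
  rw [mul_comm] at hsum
  rw [chain_measure_eq σ]
  exact ENNReal.eq_inv_of_mul_eq_one_left hsum

lemma measure_orderEvent (E : Set (Fin 7 → ℝ)) (hE : MeasurableSet E)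
    (Q : Equiv.Perm (Fin 7) → Prop) [DecidablePred Q]
    (hQ : ∀ σ (x : Fin 7 → ℝ), x ∈ chain σ → (x ∈ E ↔ Q σ)) :
    P E = (Finset.univ.filter Q).card * (5040 : ℝ≥0∞)⁻¹ := by
  set U := ⋃ σ ∈ Finset.univ.filter Q, chain σ with hU
  have hsubU : U ⊆ E := by
    intro x hx
    rw [hU, Set.mem_iUnion] at hx
    obtain ⟨σ, hσ⟩ := hx
    rw [Set.mem_iUnion] at hσ
    obtain ⟨hσQ, hxσ⟩ := hσ
    exact (hQ σ x hxσ).2 (Finset.mem_filter.1 hσQ).2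
  have hEU : P (E \ U) = 0 := by
    refine measure_mono_null (fun x hx => ?_) not_chain_null
    intro σ hxσ
    exact hx.2 (Set.mem_iUnion.2 ⟨σ, Set.mem_iUnion.2
      ⟨Finset.mem_filter.2 ⟨Finset.mem_univ σ, (hQ σ x hxσ).1 hx.1⟩, hxσ⟩⟩)
  have hPE : P E = P U := by
    apply le_antisymm
    · calc P E ≤ P (U ∪ (E \ U)) := by
            refine measure_mono (fun x hx => ?_)
            by_cases h : x ∈ U
            · exact Or.inl h
            · exact Or.inr ⟨hx, h⟩
        _ ≤ P U + P (E \ U) := measure_union_le _ _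
        _ = P U := by rw [hEU, add_zero]
    · exact measure_mono hsubU
  rw [hPE, hU, measure_biUnion_finset (fun a _ b _ hab => chain_disjoint hab)
    (fun τ _ => chain_measurable τ)]
  rw [Finset.sum_congr rfl (fun τ _ => chain_measure τ), Finset.sum_const, nsmul_eq_mul]

lemma measurable_ltpair (a b : Fin 7) : MeasurableSet {x : Fin 7 → ℝ | x a < x b} :=
  measurableSet_lt (measurable_pi_apply a) (measurable_pi_apply b)

set_option maxRecDepth 40000 in
lemma cardB : (Finset.univ.filter
    (fun σ : Equiv.Perm (Fin 7) => σ⁻¹ 0 < σ⁻¹ 1 ∧ σ⁻¹ 2 < σ⁻¹ 1)).card = 1680 := by decide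

set_option maxRecDepth 40000 in
lemma cardA : (Finset.univ.filter
    (fun σ : Equiv.Perm (Fin 7) => σ⁻¹ 0 < σ⁻¹ 1 ∧ σ⁻¹ 2 < σ⁻¹ 1 ∧ σ⁻¹ 4 < σ⁻¹ 5 ∧
      σ⁻¹ 6 < σ⁻¹ 5 ∧ ¬(σ⁻¹ 1 < σ⁻¹ 2 ∧ σ⁻¹ 3 < σ⁻¹ 2) ∧ ¬(σ⁻¹ 2 < σ⁻¹ 3 ∧ σ⁻¹ 4 < σ⁻¹ 3) ∧
      ¬(σ⁻¹ 3 < σ⁻¹ 4 ∧ σ⁻¹ 5 < σ⁻¹ 4))).card = 288 := by decide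

end FmFour

open scoped ENNReal in
theorem fm_four_eq_six_thirtyfifths
    (μ : Measure ℝ) [IsProbabilityMeasure μ] [NullSingletonClass μ] :
    (Measure.pi fun _ : Fin 7 => μ)
        {x | x 0 < x 1 ∧ x 2 < x 1 ∧ x 4 < x 5 ∧ x 6 < x 5 ∧
             ¬(x 1 < x 2 ∧ x 3 < x 2) ∧ ¬(x 2 < x 3 ∧ x 4 < x 3) ∧
             ¬(x 3 < x 4 ∧ x 5 < x 4)} /
      (Measure.pi fun _ : Fin 7 => μ) {x | x 0 < x 1 ∧ x 2 < x 1} = 6 / 35 := by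
  have hB : (Measure.pi fun _ : Fin 7 => μ) {x | x 0 < x 1 ∧ x 2 < x 1}
      = (1680 : ℝ≥0∞) * (5040 : ℝ≥0∞)⁻¹ := by
    rw [FmFour.measure_orderEvent {x | x 0 < x 1 ∧ x 2 < x 1}
      (by exact (FmFour.measurable_ltpair 0 1).inter (FmFour.measurable_ltpair 2 1))
      (fun σ : Equiv.Perm (Fin 7) => σ⁻¹ 0 < σ⁻¹ 1 ∧ σ⁻¹ 2 < σ⁻¹ 1)
      (fun σ x hx => by simp only [Set.mem_setOf_eq, FmFour.mem_chain_lt hx]),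
      FmFour.cardB]
    norm_num
  have hA : (Measure.pi fun _ : Fin 7 => μ)
        {x | x 0 < x 1 ∧ x 2 < x 1 ∧ x 4 < x 5 ∧ x 6 < x 5 ∧
             ¬(x 1 < x 2 ∧ x 3 < x 2) ∧ ¬(x 2 < x 3 ∧ x 4 < x 3) ∧
             ¬(x 3 < x 4 ∧ x 5 < x 4)}
      = (288 : ℝ≥0∞) * (5040 : ℝ≥0∞)⁻¹ := by
    rw [FmFour.measure_orderEvent
      {x | x 0 < x 1 ∧ x 2 < x 1 ∧ x 4 < x 5 ∧ x 6 < x 5 ∧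
           ¬(x 1 < x 2 ∧ x 3 < x 2) ∧ ¬(x 2 < x 3 ∧ x 4 < x 3) ∧ ¬(x 3 < x 4 ∧ x 5 < x 4)}
      (by exact (FmFour.measurable_ltpair 0 1).inter ((FmFour.measurable_ltpair 2 1).inter
        ((FmFour.measurable_ltpair 4 5).inter ((FmFour.measurable_ltpair 6 5).inter
          ((((FmFour.measurable_ltpair 1 2).inter (FmFour.measurable_ltpair 3 2)).compl).inter
            ((((FmFour.measurable_ltpair 2 3).inter (FmFour.measurable_ltpair 4 3)).compl).inter
              (((FmFour.measurable_ltpair 3 4).inter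
                (FmFour.measurable_ltpair 5 4)).compl)))))))
      (fun σ : Equiv.Perm (Fin 7) => σ⁻¹ 0 < σ⁻¹ 1 ∧ σ⁻¹ 2 < σ⁻¹ 1 ∧ σ⁻¹ 4 < σ⁻¹ 5 ∧
        σ⁻¹ 6 < σ⁻¹ 5 ∧ ¬(σ⁻¹ 1 < σ⁻¹ 2 ∧ σ⁻¹ 3 < σ⁻¹ 2) ∧
        ¬(σ⁻¹ 2 < σ⁻¹ 3 ∧ σ⁻¹ 4 < σ⁻¹ 3) ∧ ¬(σ⁻¹ 3 < σ⁻¹ 4 ∧ σ⁻¹ 5 < σ⁻¹ 4))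
      (fun σ x hx => by simp only [Set.mem_setOf_eq, FmFour.mem_chain_lt hx]),
      FmFour.cardA]
    norm_num
  rw [hA, hB]
  have hb : (1680 : ℝ≥0∞) * (5040:ℝ≥0∞)⁻¹ ≠ 0 :=
    mul_ne_zero (by norm_num) (ENNReal.inv_ne_zero.2 (by norm_num))
  have hb' : (1680 : ℝ≥0∞) * (5040:ℝ≥0∞)⁻¹ ≠ ∞ :=
    ENNReal.mul_ne_top (by norm_num) (ENNReal.inv_ne_top.2 (by norm_num))
  rw [ENNReal.div_eq_div_iff (by norm_num : (35:ℝ≥0∞) ≠ 0) (by norm_num) hb hb']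
  rw [show (35 : ℝ≥0∞) * (288 * 5040⁻¹) = 10080 * 5040⁻¹ by rw [← mul_assoc]; norm_num,
      show (1680 : ℝ≥0∞) * 5040⁻¹ * 6 = 10080 * 5040⁻¹ by
        rw [mul_comm _ (6:ℝ≥0∞), ← mul_assoc]; norm_num]
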